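/- Let X ⊂ ℝ^m be a compact box covered by sub-boxes Y^1,...,Y^N, f: ℝ^m → ℝ^p continuous, λ ∈ ℝ^p with λ_j > 0 for all j, and for each k let f^k ≤ f componentwise on Y^k. Suppose for each k: (i) f_j(x) - f_j^k(x) < ε/8 for all j and x ∈ Y^k, and (ii) |f_j^k(x) - ν_j^k| ≤ 3ε/8 for all j and x ∈ Y^k, where ν_j^k = min_{Y^k} f_j^k. Let x^k be a minimizer of ∑_j λ_j f_j^k over Y^k, A = {x^1,...,x^N}, and S = {x ∈ A : ∄ y ∈ A with f(y) ⪯ f(x)}. Then every x ∈ S is an ε-efficient solution of min_X f: no y ∈ X satisfies f(y) + ε·e ⪯ f(x). -/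
import Mathlib


open Finset

/-- Convergence of the piecewise convexification algorithm: the non-dominated points among
the weighted-sum minimizers of the convex sub-problems are `ε`-efficient solutions of the
original problem. -/
theorem stmt17 (m p N : ℕ) (Y : Fin N → Set (Fin m → ℝ))
    (hYc : ∀ k, IsCompact (Y k)) (hYne : ∀ k, (Y k).Nonempty)
    (f : (Fin m → ℝ) → Fin p → ℝ) (hf : Continuous f)
    (fk : Fin N → (Fin m → ℝ) → Fin p → ℝ) (hfk : ∀ k, ContinuousOn (fk k) (Y k))
    (lam : Fin p → ℝ) (hlam : ∀ j, 0 < lam j)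
    (ε : ℝ) (hε : 0 < ε)
    (hle : ∀ k, ∀ x ∈ Y k, ∀ j, fk k x j ≤ f x j)
    (hgap : ∀ k, ∀ x ∈ Y k, ∀ j, f x j - fk k x j < ε / 8)
    (ν : Fin N → Fin p → ℝ)
    (hν : ∀ k j, IsLeast ((fun x => fk k x j) '' Y k) (ν k j))
    (hnear : ∀ k, ∀ x ∈ Y k, ∀ j, |fk k x j - ν k j| ≤ 3 * ε / 8)
    (xk : Fin N → (Fin m → ℝ)) (hxkmem : ∀ k, xk k ∈ Y k)
    (hxkopt : ∀ k, ∀ y ∈ Y k, ∑ j, lam j * fk k (xk k) j ≤ ∑ j, lam j * fk k y j)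
    (x : Fin m → ℝ)
    (hxS : x ∈ {z ∈ Set.range xk |
      ¬∃ y ∈ Set.range xk, (∀ j, f y j ≤ f z j) ∧ f y ≠ f z}) :
    ¬∃ y ∈ ⋃ k, Y k, (∀ j, f y j + ε ≤ f x j) ∧ (fun j => f y j + ε) ≠ f x := by
  rintro ⟨y, hy, hdom, hne⟩
  obtain ⟨k, hyk⟩ := Set.mem_iUnion.mp hy
  rcases Nat.eq_zero_or_pos p with hp | hp
  · exact hne (funext fun j => absurd j.2 (by omega))
  · obtain ⟨hx_mem, hx_nd⟩ := hxS
    apply hx_nd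
    have key : ∀ j, f (xk k) j < f x j := by
      intro j
      have h1 := hgap k (xk k) (hxkmem k) j
      have h2 := abs_le.mp (hnear k (xk k) (hxkmem k) j)
      have h3 := (hν k j).2 ⟨y, hyk, rfl⟩
      have h4 := hle k y hyk j
      have h5 := hdom j
      linarith [h2.2]
    refine ⟨xk k, Set.mem_range_self k, fun j => (key j).le, fun heq => ?_⟩
    exact absurd (congrFun heq ⟨0, hp⟩) (key ⟨0, hp⟩).ne
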